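/- Let H = ([n], [m], E) be a bipartite graph with connected base graph and let p ∈ (0,1]^n. Define Λ = {λ > 0 : there exists a set of cylinders A_1,...,A_n in I^m conforming with H with μ(A_i) = min(1, λ p_i) and μ(∪_i A_i) = 1}. Then Λ is nonempty, bounded below by a positive number, and its infimum λ_0 > 0 is the unique positive real such that λ_0 p lies on the boundary of H (i.e., for every ε ∈ (0,1), (1−ε)λ_0 p is in the interior of H and (1+ε)λ_0 p is not). -/

import Mathlib

open MeasureTheory

/-- The uniform probability measure on the unit cube `[0,1]^m`, viewed as a measure
on `Fin m → ℝ`. -/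
noncomputable def cubeMeasure (m : ℕ) : Measure (Fin m → ℝ) :=
  Measure.pi fun _ => volume.restrict (Set.Icc 0 1)

/-- `A` is a cylinder depending only on the coordinates in `S`. -/
def DependsOnlyOn {m : ℕ} (A : Set (Fin m → ℝ)) (S : Set (Fin m)) : Prop :=
  ∀ x y : Fin m → ℝ, (∀ j ∈ S, x j = y j) → (x ∈ A ↔ y ∈ A)

/-- A cylinder set conforms with the bigraph given by edge relation `E`:
each `A i` is measurable and depends only on the coordinates adjacent to `i`. -/
def Conforms {n m : ℕ} (E : Fin n → Fin m → Prop) (A : Fin n → Set (Fin m → ℝ)) : Prop :=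
  (∀ i, MeasurableSet (A i)) ∧ ∀ i, DependsOnlyOn (A i) {j | E i j}

/-- `p` lies in the interior of the bigraph: `p ∈ (0,1)^n` and every conforming
cylinder set with measure vector `p` has union of measure less than 1. -/
def InInterior {n m : ℕ} (E : Fin n → Fin m → Prop) (p : Fin n → ℝ) : Prop :=
  (∀ i, 0 < p i ∧ p i < 1) ∧
  ∀ A : Fin n → Set (Fin m → ℝ), Conforms E A →
    (∀ i, cubeMeasure m (A i) = ENNReal.ofReal (p i)) →
    cubeMeasure m (⋃ i, A i) < 1

/-- The base graph of the bigraph: left vertices are adjacent iff they share a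
common right neighbor. -/
def baseGraph {n m : ℕ} (E : Fin n → Fin m → Prop) : SimpleGraph (Fin n) where
  Adj i j := i ≠ j ∧ ∃ k, E i k ∧ E j k
  symm := ⟨by rintro i j ⟨h, k, h1, h2⟩; exact ⟨h.symm, k, h2, h1⟩⟩
  loopless := ⟨by rintro i ⟨h, -⟩; exact h rfl⟩

/-- The set of scaling factors `λ` for which some conforming cylinder set with
measure vector `min 1 (λ • p)` has union of full measure. -/
def LamSet {n m : ℕ} (E : Fin n → Fin m → Prop) (p : Fin n → ℝ) : Set ℝ :=
  {lam | 0 < lam ∧ ∃ A : Fin n → Set (Fin m → ℝ), Conforms E A ∧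
    (∀ i, cubeMeasure m (A i) = ENNReal.ofReal (min 1 (lam * p i))) ∧
    cubeMeasure m (⋃ i, A i) = 1}

/-! ### Auxiliary lemmas -/

instance : IsProbabilityMeasure (volume.restrict (Set.Icc (0:ℝ) 1)) :=
  ⟨by rw [Measure.restrict_apply_univ, Real.volume_Icc]; norm_num⟩

instance (m : ℕ) : IsProbabilityMeasure (cubeMeasure m) := by
  unfold cubeMeasure; infer_instance

theorem cube_coord (m : ℕ) (j : Fin m) (S : Set ℝ) :
    cubeMeasure m {x | x j ∈ S} = (volume.restrict (Set.Icc 0 1)) S := by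
  have h : {x : Fin m → ℝ | x j ∈ S} = Set.pi Set.univ (fun k => if k = j then S else Set.univ) := by
    ext x; simp only [Set.mem_pi, Set.mem_univ, true_implies, Set.mem_setOf_eq]
    constructor
    · intro h k; split <;> simp_all
    · intro h; have := h j; simpa using this
  rw [h, cubeMeasure, Measure.pi_pi]
  have : ∀ i : Fin m, (volume.restrict (Set.Icc 0 1)) (if i = j then S else Set.univ)
      = if i = j then (volume.restrict (Set.Icc 0 1)) S else 1 := by
    intro i; split <;> simp
  rw [Finset.prod_congr rfl (fun i _ => this i), Finset.prod_ite_eq']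
  simp

theorem cube_slab (m : ℕ) (j : Fin m) (t : ℝ) (h0 : 0 ≤ t) (h1 : t ≤ 1) :
    cubeMeasure m {x | x j ≤ t} = ENNReal.ofReal t := by
  have : {x : Fin m → ℝ | x j ≤ t} = {x | x j ∈ Set.Iic t} := rfl
  rw [this, cube_coord, Measure.restrict_apply measurableSet_Iic]
  have : Set.Iic t ∩ Set.Icc 0 1 = Set.Icc 0 t := by
    ext x; simp only [Set.mem_inter_iff, Set.mem_Iic, Set.mem_Icc]
    constructor
    · rintro ⟨h, h2, _⟩; exact ⟨h2, h⟩
    · rintro ⟨h2, h⟩; exact ⟨h, h2, h.trans h1⟩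
  rw [this, Real.volume_Icc]; simp

theorem cube_strip (m : ℕ) (j : Fin m) (s t : ℝ) :
    cubeMeasure m {x | x j ∈ Set.Ioc s t} ≤ ENNReal.ofReal (t - s) := by
  rw [cube_coord]
  calc (volume.restrict (Set.Icc 0 1)) (Set.Ioc s t) ≤ volume (Set.Ioc s t) :=
        Measure.restrict_apply_le _ _
    _ = ENNReal.ofReal (t - s) := by rw [Real.volume_Ioc]

theorem exists_superset (m : ℕ) (A : Set (Fin m → ℝ)) (hA : MeasurableSet A)
    (S : Set (Fin m)) (hAS : DependsOnlyOn A S) (j : Fin m) (hj : j ∈ S)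
    (t : ℝ) (ht0 : (cubeMeasure m A).toReal ≤ t) (ht1 : t ≤ 1) :
    ∃ B, A ⊆ B ∧ MeasurableSet B ∧ DependsOnlyOn B S ∧
      cubeMeasure m B = ENNReal.ofReal t := by
  set μ := cubeMeasure m with hμ
  have hslabm : ∀ s : ℝ, MeasurableSet {x : Fin m → ℝ | x j ≤ s} := fun s =>
    measurableSet_le (measurable_pi_apply j) measurable_const
  set f : ℝ → ℝ := fun s => (μ (A ∪ {x | x j ≤ s})).toReal with hf
  have hfin : ∀ C : Set (Fin m → ℝ), μ C ≠ ⊤ := fun C => measure_ne_top μ C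
  have key : ∀ a b : ℝ, a ≤ b → f a ≤ f b ∧ f b ≤ f a + (b - a) := by
    intro a b hab
    constructor
    · exact ENNReal.toReal_mono (hfin _) (measure_mono (Set.union_subset_union_right _
        (fun x hx => le_trans hx hab)))
    · have hsub : A ∪ {x : Fin m → ℝ | x j ≤ b} ⊆
          (A ∪ {x | x j ≤ a}) ∪ {x | x j ∈ Set.Ioc a b} := by
        rintro x (hx | hx)
        · exact Or.inl (Or.inl hx)
        · rcases le_or_gt (x j) a with h | h
          · exact Or.inl (Or.inr h)
          · exact Or.inr ⟨h, hx⟩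
      have h1 : μ (A ∪ {x | x j ≤ b}) ≤ μ (A ∪ {x | x j ≤ a}) + ENNReal.ofReal (b - a) :=
        le_trans (measure_mono hsub) (le_trans (measure_union_le _ _)
          (add_le_add le_rfl (cube_strip m j a b)))
      calc f b ≤ ((μ (A ∪ {x | x j ≤ a})) + ENNReal.ofReal (b - a)).toReal :=
            ENNReal.toReal_mono (by finiteness) h1
        _ = f a + (b - a) := by
            rw [ENNReal.toReal_add (hfin _) ENNReal.ofReal_ne_top,
              ENNReal.toReal_ofReal (by linarith)]
  have hcont : Continuous f := by
    refine (LipschitzWith.of_dist_le_mul (K := 1) ?_).continuous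
    intro a b
    rcases le_total a b with h | h
    · rw [Real.dist_eq, Real.dist_eq, abs_of_nonpos (by linarith [(key a b h).1]),
        abs_of_nonpos (by linarith)]
      have := (key a b h).2; push_cast; linarith
    · rw [Real.dist_eq, Real.dist_eq, abs_of_nonneg (by linarith [(key b a h).1]),
        abs_of_nonneg (by linarith)]
      have := (key b a h).2; push_cast; linarith
  have hf0 : f 0 = (μ A).toReal := by
    have h0 : μ {x : Fin m → ℝ | x j ≤ (0:ℝ)} = 0 := by
      rw [hμ, cube_slab m j 0 le_rfl zero_le_one]; simp
    have : μ (A ∪ {x : Fin m → ℝ | x j ≤ (0:ℝ)}) = μ A :=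
      le_antisymm (le_trans (measure_union_le _ _) (by rw [h0, add_zero]))
        (measure_mono Set.subset_union_left)
    rw [hf]; simp only [this]
  have hf1 : f 1 = 1 := by
    have h1 : μ (A ∪ {x : Fin m → ℝ | x j ≤ (1:ℝ)}) = 1 := by
      refine le_antisymm prob_le_one ?_
      have : μ {x : Fin m → ℝ | x j ≤ (1:ℝ)} = 1 := by
        rw [hμ, cube_slab m j 1 zero_le_one le_rfl]; simp
      rw [← this]; exact measure_mono Set.subset_union_right
    rw [hf]; simp only [h1, ENNReal.toReal_one]
  have hmem : t ∈ Set.Icc (f 0) (f 1) := by rw [hf0, hf1]; exact ⟨ht0, ht1⟩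
  obtain ⟨s, _, hfs⟩ := intermediate_value_Icc zero_le_one hcont.continuousOn hmem
  refine ⟨A ∪ {x | x j ≤ s}, Set.subset_union_left, hA.union (hslabm s), ?_, ?_⟩
  · intro x y hxy
    have hxyj : x j = y j := hxy j hj
    constructor
    · rintro (h | h)
      · exact Or.inl ((hAS x y hxy).1 h)
      · exact Or.inr (by simp only [Set.mem_setOf_eq] at h ⊢; rw [← hxyj]; exact h)
    · rintro (h | h)
      · exact Or.inl ((hAS x y hxy).2 h)
      · exact Or.inr (by simp only [Set.mem_setOf_eq] at h ⊢; rw [hxyj]; exact h)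
  · rw [← hfs, hf]
    exact (ENNReal.ofReal_toReal (hfin _)).symm

theorem trivial_of_dependsOnlyOn_empty {m : ℕ} {A : Set (Fin m → ℝ)} {S : Set (Fin m)}
    (hS : S = ∅) (h : DependsOnlyOn A S) : A = ∅ ∨ A = Set.univ := by
  by_cases he : A = ∅
  · exact Or.inl he
  · right
    obtain ⟨x₀, hx₀⟩ := Set.nonempty_iff_ne_empty.2 he
    ext y
    simp only [Set.mem_univ, iff_true]
    exact (h x₀ y (by intro j hj; rw [hS] at hj; exact absurd hj (Set.notMem_empty j))).1 hx₀

theorem lamset_upward {n m : ℕ} (E : Fin n → Fin m → Prop) (p : Fin n → ℝ)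
    (hp : ∀ i, 0 < p i ∧ p i ≤ 1) {lam lam' : ℝ} (h : lam ∈ LamSet E p)
    (hle : lam ≤ lam') : lam' ∈ LamSet E p := by
  obtain ⟨hpos, A, ⟨hmeas, hdep⟩, hA, hU⟩ := h
  have hpos' : 0 < lam' := lt_of_lt_of_le hpos hle
  have hB : ∀ i, ∃ B, A i ⊆ B ∧ MeasurableSet B ∧ DependsOnlyOn B {j | E i j} ∧
      cubeMeasure m B = ENNReal.ofReal (min 1 (lam' * p i)) := by
    intro i
    have hmin0 : (0:ℝ) ≤ min 1 (lam * p i) :=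
      le_min zero_le_one (mul_nonneg hpos.le (hp i).1.le)
    by_cases hj : ∃ j, E i j
    · obtain ⟨j, hj⟩ := hj
      refine exists_superset m (A i) (hmeas i) _ (hdep i) j hj _ ?_ (min_le_left _ _)
      rw [hA i, ENNReal.toReal_ofReal hmin0]
      exact min_le_min le_rfl (mul_le_mul_of_nonneg_right hle (hp i).1.le)
    · have hSe : {j | E i j} = (∅ : Set (Fin m)) := by
        ext j; simp only [Set.mem_setOf_eq, Set.mem_empty_iff_false, iff_false]
        exact fun hE => hj ⟨j, hE⟩
      rcases trivial_of_dependsOnlyOn_empty hSe (hdep i) with he | hu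
      · exfalso
        have := hA i
        rw [he, measure_empty] at this
        have : min 1 (lam * p i) ≤ 0 := by
          rw [← ENNReal.ofReal_eq_zero]; exact this.symm
        have hlp : 0 < lam * p i := mul_pos hpos (hp i).1
        rcases min_cases 1 (lam * p i) with ⟨h1, _⟩ | ⟨h1, _⟩ <;> rw [h1] at this <;> linarith
      · have h1 : cubeMeasure m (A i) = 1 := by rw [hu]; exact measure_univ
        have hmin1 : min 1 (lam * p i) = 1 := by
          have := hA i; rw [h1] at this
          exact (ENNReal.ofReal_eq_one.1 this.symm)
        have hlam1 : 1 ≤ lam * p i := hmin1 ▸ min_le_right 1 (lam * p i)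
        have hlam1' : 1 ≤ lam' * p i :=
          le_trans hlam1 (mul_le_mul_of_nonneg_right hle (hp i).1.le)
        refine ⟨A i, le_refl _, hmeas i, hdep i, ?_⟩
        rw [h1, min_eq_left hlam1']
        simp
  choose B hBsub hBm hBdep hBμ using hB
  refine ⟨hpos', B, ⟨hBm, hBdep⟩, hBμ, ?_⟩
  refine le_antisymm prob_le_one ?_
  rw [← hU]
  exact measure_mono (Set.iUnion_mono hBsub)

theorem lamset_lb {n m : ℕ} (E : Fin n → Fin m → Prop) (p : Fin n → ℝ)
    (hp : ∀ i, 0 < p i ∧ p i ≤ 1) :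
    ∀ lam ∈ LamSet E p, 1 / (n + 1) ≤ lam := by
  rintro lam ⟨hpos, A, _, hA, hU⟩
  by_contra hlt
  push_neg at hlt
  have hsum : (1 : ENNReal) ≤ ∑ i, cubeMeasure m (A i) := by
    rw [← hU]; exact measure_iUnion_fintype_le _ _
  have hnn : ∀ i ∈ Finset.univ, (0:ℝ) ≤ min 1 (lam * p i) := fun i _ =>
    le_min zero_le_one (mul_nonneg hpos.le (hp i).1.le)
  have heq : ∑ i, cubeMeasure m (A i) = ENNReal.ofReal (∑ i, min 1 (lam * p i)) := by
    rw [Finset.sum_congr rfl (fun i _ => hA i), ← ENNReal.ofReal_sum_of_nonneg hnn]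
  rw [heq, ENNReal.one_le_ofReal] at hsum
  have hbound : ∑ i : Fin n, min 1 (lam * p i) ≤ n * lam := by
    calc ∑ i : Fin n, min 1 (lam * p i) ≤ ∑ _i : Fin n, lam := by
          refine Finset.sum_le_sum fun i _ => ?_
          exact le_trans (min_le_right _ _)
            (by nlinarith [(hp i).1, (hp i).2])
      _ = n * lam := by rw [Finset.sum_const, Finset.card_univ, Fintype.card_fin, nsmul_eq_mul]
  have hn : (0:ℝ) ≤ (n:ℝ) := Nat.cast_nonneg n
  have hpos1 : (0:ℝ) < (n:ℝ) + 1 := by positivity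
  have h1 : (1:ℝ) ≤ n * lam := le_trans hsum hbound
  have h2 : (n:ℝ) * lam ≤ (n:ℝ) * (1 / ((n:ℝ) + 1)) := mul_le_mul_of_nonneg_left hlt.le hn
  have h3 : (n:ℝ) * (1 / ((n:ℝ) + 1)) < 1 := by
    rw [mul_one_div, div_lt_one hpos1]; linarith
  linarith

theorem exists_nbr {n m : ℕ} (E : Fin n → Fin m → Prop)
    (hconn : (baseGraph E).Connected) {i i' : Fin n} (hne : i ≠ i') : ∃ j, E i j := by
  obtain ⟨w⟩ := hconn.preconnected i i'
  cases w with
  | nil => exact absurd rfl hne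
  | cons h _ => exact ⟨h.2.choose, h.2.choose_spec.1⟩

theorem lamset_max {n m : ℕ} (E : Fin n → Fin m → Prop) (hconn : (baseGraph E).Connected)
    (p : Fin n → ℝ) (hp : ∀ i, 0 < p i ∧ p i ≤ 1) :
    ∃ P : ℝ, 0 < P ∧ P ≤ 1 ∧ (∀ i, p i ≤ P) ∧ 1 / P ∈ LamSet E p := by
  haveI : Nonempty (Fin n) := hconn.nonempty
  have hne : (Finset.univ : Finset (Fin n)).Nonempty := Finset.univ_nonempty
  set P := Finset.univ.sup' hne p with hP
  obtain ⟨i₁, _, hi₁⟩ := Finset.exists_mem_eq_sup' hne p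
  have hPle : ∀ i, p i ≤ P := fun i => Finset.le_sup' p (Finset.mem_univ i)
  have hP0 : 0 < P := by rw [hP, hi₁]; exact (hp i₁).1
  have hP1 : P ≤ 1 := by rw [hP, hi₁]; exact (hp i₁).2
  refine ⟨P, hP0, hP1, hPle, ?_⟩
  classical
  set A : Fin n → Set (Fin m → ℝ) := fun i =>
    if h : ∃ j, E i j then {x | x h.choose ≤ p i / P} else Set.univ with hAdef
  have hmeasure : ∀ i, cubeMeasure m (A i) = ENNReal.ofReal (min 1 (1 / P * p i)) := by
    intro i
    have hdiv : 1 / P * p i = p i / P := by field_simp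
    have hdiv1 : p i / P ≤ 1 := (div_le_one hP0).2 (hPle i)
    have hmin : min 1 (1 / P * p i) = p i / P := by rw [hdiv, min_eq_right hdiv1]
    rw [hmin, hAdef]
    by_cases h : ∃ j, E i j
    · simp only [dif_pos h]
      exact cube_slab m h.choose _ (div_nonneg (hp i).1.le hP0.le) hdiv1
    · simp only [dif_neg h]
      have hPi : P = p i := by
        refine le_antisymm ?_ (hPle i)
        rw [hP]
        refine Finset.sup'_le hne p fun i' _ => ?_
        by_cases hii : i = i'
        · rw [hii]
        · exact absurd (exists_nbr E hconn hii) h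
      rw [measure_univ, hPi, div_self (hPi ▸ hP0).ne']
      simp
  refine ⟨by positivity, A, ⟨?_, ?_⟩, hmeasure, ?_⟩
  · intro i
    rw [hAdef]
    by_cases h : ∃ j, E i j
    · simp only [dif_pos h]
      exact measurableSet_le (measurable_pi_apply _) measurable_const
    · simp only [dif_neg h]; exact MeasurableSet.univ
  · intro i
    rw [hAdef]
    by_cases h : ∃ j, E i j
    · simp only [dif_pos h]
      intro x y hxy
      have := hxy h.choose h.choose_spec
      simp only [Set.mem_setOf_eq, this]
    · simp only [dif_neg h]
      intro x y _; simp
  · refine le_antisymm prob_le_one ?_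
    have h1 : cubeMeasure m (A i₁) = 1 := by
      rw [hmeasure i₁, ← hi₁, one_div, inv_mul_cancel₀ hP0.ne']
      simp
    rw [← h1]
    exact measure_mono (Set.subset_iUnion A i₁)

theorem stmt3 {n m : ℕ} (E : Fin n → Fin m → Prop)
    (hconn : (baseGraph E).Connected) (p : Fin n → ℝ)
    (hp : ∀ i, 0 < p i ∧ p i ≤ 1) :
    (LamSet E p).Nonempty ∧
    (∃ c > (0:ℝ), ∀ lam ∈ LamSet E p, c ≤ lam) ∧
    0 < sInf (LamSet E p) ∧
    (∀ ε ∈ Set.Ioo (0:ℝ) 1,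
      InInterior E (fun i => (1 - ε) * (sInf (LamSet E p) * p i)) ∧
      ¬ InInterior E (fun i => (1 + ε) * (sInf (LamSet E p) * p i))) ∧
    (∀ lam' : ℝ, 0 < lam' →
      (∀ ε ∈ Set.Ioo (0:ℝ) 1,
        InInterior E (fun i => (1 - ε) * (lam' * p i)) ∧
        ¬ InInterior E (fun i => (1 + ε) * (lam' * p i))) →
      lam' = sInf (LamSet E p)) := by
  obtain ⟨P, hP0, hP1, hPle, hmemP⟩ := lamset_max E hconn p hp
  have hnonempty : (LamSet E p).Nonempty := ⟨1 / P, hmemP⟩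
  have hlb := lamset_lb E p hp
  have hbdd : BddBelow (LamSet E p) := ⟨1 / (n + 1), fun x hx => hlb x hx⟩
  set lam0 := sInf (LamSet E p) with hl0
  have hcpos : (0:ℝ) < 1 / (n + 1) := by positivity
  have hlam0pos : 0 < lam0 := lt_of_lt_of_le hcpos (le_csInf hnonempty hlb)
  have hlam0le : lam0 ≤ 1 / P := csInf_le hbdd hmemP
  have hlam0p : ∀ i, lam0 * p i ≤ 1 := by
    intro i
    calc lam0 * p i ≤ (1 / P) * p i := mul_le_mul_of_nonneg_right hlam0le (hp i).1.le
      _ = p i / P := by field_simp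
      _ ≤ 1 := (div_le_one hP0).2 (hPle i)
  have hmem_of : ∀ lam : ℝ, 0 < lam → (∀ i, lam * p i < 1) →
      ∀ A : Fin n → Set (Fin m → ℝ), Conforms E A →
      (∀ i, cubeMeasure m (A i) = ENNReal.ofReal (lam * p i)) →
      cubeMeasure m (⋃ i, A i) = 1 → lam ∈ LamSet E p := by
    intro lam hl hlt A hconf hA hU
    exact ⟨hl, A, hconf, fun i => by rw [hA i, min_eq_right (hlt i).le], hU⟩
  have hInt : ∀ lam : ℝ, 0 < lam → lam < lam0 →
      InInterior E (fun i => lam * p i) := by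
    intro lam hl hllt
    have hlt : ∀ i, lam * p i < 1 := by
      intro i
      have := hlam0p i
      have hpi := (hp i).1
      nlinarith
    refine ⟨fun i => ⟨mul_pos hl (hp i).1, hlt i⟩, ?_⟩
    intro A hconf hA
    by_contra hge
    push_neg at hge
    have hU : cubeMeasure m (⋃ i, A i) = 1 := le_antisymm prob_le_one hge
    have hmem := hmem_of lam hl hlt A hconf hA hU
    exact absurd (csInf_le hbdd hmem) (not_le.2 hllt)
  have hNotInt : ∀ lam : ℝ, lam0 < lam → ¬ InInterior E (fun i => lam * p i) := by
    intro lam hlt hI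
    have hcoord : ∀ i, lam * p i < 1 := fun i => (hI.1 i).2
    obtain ⟨lam1, hlam1mem, hlam1lt⟩ := exists_lt_of_csInf_lt hnonempty hlt
    have hmem : lam ∈ LamSet E p := lamset_upward E p hp hlam1mem hlam1lt.le
    obtain ⟨hlp, A, hconf, hA, hU⟩ := hmem
    have hA' : ∀ i, cubeMeasure m (A i) = ENNReal.ofReal (lam * p i) := fun i => by
      rw [hA i, min_eq_right (hcoord i).le]
    have := hI.2 A hconf hA'
    rw [hU] at this
    exact absurd this (lt_irrefl 1)
  refine ⟨hnonempty, ⟨1 / (n + 1), hcpos, hlb⟩, hlam0pos, ?_, ?_⟩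
  · rintro ε ⟨hε0, hε1⟩
    constructor
    · have heq : (fun i => (1 - ε) * (lam0 * p i)) = fun i => ((1 - ε) * lam0) * p i := by
        funext i; ring
      rw [heq]
      exact hInt _ (by nlinarith) (by nlinarith)
    · have heq : (fun i => (1 + ε) * (lam0 * p i)) = fun i => ((1 + ε) * lam0) * p i := by
        funext i; ring
      rw [heq]
      exact hNotInt _ (by nlinarith)
  · intro lam' hl' hbd
    by_contra hne'
    rcases lt_or_gt_of_ne hne' with hlt' | hgt'
    · -- lam' < lam0 : use ε with (1+ε)lam' < lam0
      set ε := min (1/2) ((lam0 - lam') / (2 * lam')) with hε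
      have hεpos : 0 < ε := lt_min (by norm_num) (div_pos (by linarith) (by linarith))
      have hε1 : ε < 1 := lt_of_le_of_lt (min_le_left _ _) (by norm_num)
      have hεle : ε ≤ (lam0 - lam') / (2 * lam') := min_le_right _ _
      have hkey : (1 + ε) * lam' < lam0 := by
        have h2 : ε * lam' ≤ (lam0 - lam') / 2 := by
          calc ε * lam' ≤ ((lam0 - lam') / (2 * lam')) * lam' :=
                mul_le_mul_of_nonneg_right hεle hl'.le
            _ = (lam0 - lam') / 2 := by field_simp
        nlinarith
      have hI := (hbd ε ⟨hεpos, hε1⟩).2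
      have heq : (fun i => (1 + ε) * (lam' * p i)) = fun i => ((1 + ε) * lam') * p i := by
        funext i; ring
      rw [heq] at hI
      exact hI (hInt _ (by nlinarith) hkey)
    · -- lam0 < lam' : use ε with lam0 < (1-ε)lam'
      set ε := min (1/2) ((lam' - lam0) / (2 * lam')) with hε
      have hεpos : 0 < ε := lt_min (by norm_num) (div_pos (by linarith) (by linarith))
      have hε1 : ε < 1 := lt_of_le_of_lt (min_le_left _ _) (by norm_num)
      have hεle : ε ≤ (lam' - lam0) / (2 * lam') := min_le_right _ _
      have hkey : lam0 < (1 - ε) * lam' := by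
        have h2 : ε * lam' ≤ (lam' - lam0) / 2 := by
          calc ε * lam' ≤ ((lam' - lam0) / (2 * lam')) * lam' :=
                mul_le_mul_of_nonneg_right hεle hl'.le
            _ = (lam' - lam0) / 2 := by field_simp
        nlinarith
      have hI := (hbd ε ⟨hεpos, hε1⟩).1
      have heq : (fun i => (1 - ε) * (lam' * p i)) = fun i => ((1 - ε) * lam') * p i := by
        funext i; ring
      rw [heq] at hI
      exact hNotInt _ hkey hI
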